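/- Let κ be an uncountable regular limit cardinal, and let A ⊆ κ be a set of infinite regular cardinals that is unbounded in κ and nonstationary in κ. Let D be an ultrafilter on A containing every tail set {a ∈ A : a > β} for β < κ. Then cf(∏A/D) ≥ κ⁺. -/

import Mathlib

universe u

open Cardinal Set

namespace TukeySpec

/-- A subset `S` of a preorder is cofinal if every element has an upper bound in `S`. -/
def IsCofinal {P : Type*} [Preorder P] (S : Set P) : Prop :=
  ∀ p : P, ∃ s ∈ S, p ≤ s

/-- `Q` is a Tukey quotient of `P` (i.e. `P ≥_T Q`): there is a map `P → Q`
sending cofinal sets to cofinal sets. -/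
def TukeyQuot (P : Type*) (Q : Type*) [Preorder P] [Preorder Q] : Prop :=
  ∃ φ : P → Q, ∀ S : Set P, IsCofinal S → IsCofinal (φ '' S)

/-- `P` has calibre `(κ, l, m)`. -/
def Calibre (P : Type u) [Preorder P] (κ l m : Cardinal.{u}) : Prop :=
  ∀ P' : Set P, #P' = κ → ∃ R ⊆ P', #R = l ∧ ∀ B ⊆ R, #B = m → BddAbove B

/-- `P` has calibre `κ` (the simplified form): every `κ`-sized subset has a
`κ`-sized subset which is bounded in `P`. -/
def CalibreSimple (P : Type u) [Preorder P] (κ : Cardinal.{u}) : Prop :=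
  ∀ P' : Set P, #P' = κ → ∃ R ⊆ P', #R = κ ∧ BddAbove R

/-- The Tukey spectrum of a poset: all regular cardinals `κ` with `P ≥_T κ`,
where `κ` carries its usual (ordinal) ordering. -/
def specPoset (P : Type u) [Preorder P] : Set Cardinal.{u} :=
  {κ | κ.IsRegular ∧ TukeyQuot P ↥(Set.Iio κ.ord)}

/-- The product `∏A` of a set of cardinals: all functions on `A` with
`f a < a` (as ordinals). -/
def piSet (A : Set Cardinal.{0}) : Set (↥A → Ordinal.{0}) :=
  {f | ∀ a : ↥A, f a < (a : Cardinal).ord}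

/-- A family of members of `∏A` is bounded if it has an upper bound in `(∏A, ≤)`
(pointwise order). -/
def BddIn (A : Set Cardinal.{0}) (S : Set (↥A → Ordinal.{0})) : Prop :=
  ∃ h ∈ piSet A, ∀ f ∈ S, ∀ a : ↥A, f a ≤ h a

/-- The Tukey spectrum of a set `A` of regular cardinals: all regular `κ` for which
there is a `κ`-sized family `F ⊆ ∏A` all of whose `κ`-sized subfamilies are
unbounded in `(∏A, ≤)`. -/
def spec (A : Set Cardinal.{0}) : Set Cardinal.{0} :=
  {κ | κ.IsRegular ∧ ∃ F ⊆ piSet A, #F = Cardinal.lift.{1} κ ∧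
    ∀ F₀ ⊆ F, #F₀ = Cardinal.lift.{1} κ → ¬ BddIn A F₀}

/-- `cf(∏A/D)`: the least cardinality of a subset of `∏A` which is cofinal
modulo the ultrafilter `D`. -/
noncomputable def cofUlt (A : Set Cardinal.{0}) (D : Ultrafilter ↥A) : Cardinal.{1} :=
  sInf {c : Cardinal.{1} | ∃ S ⊆ piSet A, #S = c ∧
    ∀ f ∈ piSet A, ∃ g ∈ S, {a : ↥A | f a ≤ g a} ∈ D}

/-- `pcf(A)`: the set of all cofinalities `cf(∏A/D)` as `D` ranges over
ultrafilters on `A`. -/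
def pcf (A : Set Cardinal.{0}) : Set Cardinal.{0} :=
  {κ | ∃ D : Ultrafilter ↥A, Cardinal.lift.{1} κ = cofUlt A D}

/-- `ub(F)`: the set of coordinates `a ∈ A` where the family `F` is unbounded. -/
def ub (A : Set Cardinal.{0}) (F : Set (↥A → Ordinal.{0})) : Set ↥A :=
  {a | ∀ β < (a : Cardinal).ord, ∃ f ∈ F, β < f a}

/-- The strong part of the Tukey spectrum: `l ∈ spec*(A)` iff there is an
`l`-sized family `F ⊆ ∏A` such that every `l`-sized subfamily has a set of
unbounded coordinates which is unbounded in `sup A`. -/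
def specStarMem (A : Set Cardinal.{0}) (l : Cardinal.{0}) : Prop :=
  l.IsRegular ∧ ∃ F ⊆ piSet A, #F = Cardinal.lift.{1} l ∧
    ∀ F₀ ⊆ F, #F₀ = Cardinal.lift.{1} l →
      ∀ β < sSup A, ∃ a ∈ ub A F₀, β < (a : Cardinal)

/-- `κ` is a limit point of the set `X` of cardinals. -/
def IsLimitPt (X : Set Cardinal.{0}) (κ : Cardinal.{0}) : Prop :=
  ∀ β < κ, ∃ x ∈ X, β < x ∧ x < κ

/-- `C` is a closed unbounded subset of `κ`. -/
def IsClubIn (C : Set Ordinal.{0}) (κ : Ordinal.{0}) : Prop :=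
  C ⊆ Set.Iio κ ∧ (∀ β < κ, ∃ o ∈ C, β < o) ∧
    ∀ β < κ, β ≠ 0 → (∀ γ < β, ∃ o ∈ C, γ < o ∧ o < β) → β ∈ C

/-- A set `S` of cardinals is stationary in `κ`: it meets every club of `κ`. -/
def StatIn (S : Set Cardinal.{0}) (κ : Cardinal.{0}) : Prop :=
  ∀ C : Set Ordinal.{0}, IsClubIn C κ.ord → ∃ a ∈ S, a.ord ∈ C

/-- `κ` is Mahlo: strongly inaccessible and the regular cardinals below `κ`
are stationary in `κ`. -/
def IsMahlo (κ : Cardinal.{0}) : Prop :=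
  κ.IsInaccessible ∧ StatIn {a | a < κ ∧ a.IsRegular} κ

/-- `κ` is weakly compact: strongly inaccessible and `κ → (κ)²₂`. -/
def IsWeaklyCompact (κ : Cardinal.{0}) : Prop :=
  κ.IsInaccessible ∧
    ∀ c : Ordinal.{0} → Ordinal.{0} → Bool,
      ∃ H ⊆ Set.Iio κ.ord, #H = Cardinal.lift.{1} κ ∧
        ∃ b : Bool, ∀ α ∈ H, ∀ β ∈ H, α < β → c α β = b

/-- `θ` carries a Jónsson algebra: there is `F` from finite subsets of `θ` to `θ`
such that `F` applied to finite subsets of any `θ`-sized `H ⊆ θ` covers `θ`. -/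
def CarriesJonsson (θ : Cardinal.{0}) : Prop :=
  ∃ F : Finset Ordinal.{0} → Ordinal.{0},
    (∀ s : Finset Ordinal.{0}, (↑s : Set Ordinal) ⊆ Set.Iio θ.ord → F s < θ.ord) ∧
    ∀ H ⊆ Set.Iio θ.ord, #H = Cardinal.lift.{1} θ →
      ∀ γ < θ.ord, ∃ s : Finset Ordinal.{0}, (↑s : Set Ordinal) ⊆ H ∧ F s = γ

/-- `cf(∏A/J_bd)`: the least cardinality of a subset of `∏A` cofinal modulo
the ideal of bounded subsets of `A`. -/
noncomputable def cofJbd (A : Set Cardinal.{0}) : Cardinal.{1} :=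
  sInf {c : Cardinal.{1} | ∃ S ⊆ piSet A, #S = c ∧
    ∀ f ∈ piSet A, ∃ g ∈ S, ∃ b < sSup A, ∀ a : ↥A, b < (a : Cardinal) → f a ≤ g a}

/-- `μ` is a limit cardinal. -/
def IsLimitCard (μ : Cardinal.{0}) : Prop :=
  ℵ₀ ≤ μ ∧ ∀ ν < μ, Order.succ ν < μ

/-- If `κ` is an uncountable regular limit cardinal, `A ⊆ κ` is an
unbounded nonstationary set of infinite regular cardinals, and `D` is an
ultrafilter on `A` extending the tail filter, then `cf(∏A/D) ≥ κ⁺`. -/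
theorem statement8 (κ : Cardinal.{0}) (huncnt : ℵ₀ < κ) (hreg : κ.IsRegular)
    (hlim : ∀ μ < κ, Order.succ μ < κ)
    (A : Set Cardinal.{0}) (hA : ∀ a ∈ A, a.IsRegular) (hsub : ∀ a ∈ A, a < κ)
    (hunb : ∀ β < κ, ∃ a ∈ A, β < a) (hns : ¬ StatIn A κ)
    (D : Ultrafilter ↥A)
    (htail : ∀ β < κ, {a : ↥A | β < (a : Cardinal)} ∈ D) :
    Cardinal.lift.{1} (Order.succ κ) ≤ cofUlt A D := by
  classical
  -- basic facts
  have haleph : ∀ a : ↥A, ℵ₀ ≤ (a : Cardinal) := fun a => (hA a a.2).aleph0_le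
  have hzero : (fun _ => (0 : Ordinal)) ∈ piSet A := by
    intro a
    rw [pos_iff_ne_zero, ne_eq, Cardinal.ord_eq_zero]
    exact fun h => by have := haleph a; rw [h] at this; exact Cardinal.aleph0_ne_zero (le_zero_iff.1 this)
  -- obtain a club disjoint from A
  rw [StatIn] at hns
  push_neg at hns
  obtain ⟨C, hC, hCA⟩ := hns
  obtain ⟨hCsub, hCunb, hCcl⟩ := hC
  -- the "drop-down" function
  set c : ↥A → Ordinal := fun a => sSup (C ∩ Set.Iio (a : Cardinal).ord) with hc
  have hbdd : ∀ a : ↥A, (a : Cardinal).ord ∈ upperBounds (C ∩ Set.Iio (a : Cardinal).ord) :=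
    fun a x hx => hx.2.le
  have hclt : ∀ a : ↥A, c a < (a : Cardinal).ord := by
    intro a
    rcases lt_or_eq_of_le (csSup_le' (hbdd a)) with h | h
    · exact h
    · exfalso
      apply hCA a a.2
      have haκ : (a : Cardinal).ord < κ.ord := Cardinal.ord_lt_ord.2 (hsub a a.2)
      have hane : (a : Cardinal).ord ≠ 0 := by
        rw [ne_eq, Cardinal.ord_eq_zero]
        exact fun h0 => by have := haleph a; rw [h0] at this; exact Cardinal.aleph0_ne_zero (le_zero_iff.1 this)
      refine hCcl _ haκ hane ?_
      intro γ hγ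
      by_contra hcon
      push_neg at hcon
      have h2 : sSup (C ∩ Set.Iio (a : Cardinal).ord) ≤ γ := by
        apply csSup_le'
        intro x hx
        by_contra hxγ
        exact absurd hx.2 (not_lt.2 (hcon x hx.1 (lt_of_not_ge hxγ)))
      rw [h] at h2
      exact absurd hγ (not_lt.2 h2)
  -- reduce to a statement about each cofinal family
  apply le_csInf
  · refine ⟨#(piSet A), piSet A, subset_rfl, rfl, fun f hf => ⟨f, hf, ?_⟩⟩
    have : {a : ↥A | f a ≤ f a} = Set.univ := by ext a; simp
    rw [this]
    exact Filter.univ_mem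
  rintro b ⟨S, hSsub, hScard, hScof⟩
  rw [← hScard, Cardinal.lift_succ, Order.succ_le_iff]
  by_contra hcon
  have hSle : #↥S ≤ Cardinal.lift.{1} κ := not_lt.1 hcon
  -- S is nonempty
  have hSne : Nonempty ↥S := by
    obtain ⟨g, hg, -⟩ := hScof _ hzero
    exact ⟨⟨g, hg⟩⟩
  -- enumerate S by ordinals below κ.ord
  have hcard : #(ULift.{1} κ.ord.ToType) = Cardinal.lift.{1} κ := by
    rw [Cardinal.mk_uLift, Cardinal.mk_toType, Cardinal.card_ord]
  obtain ⟨e⟩ : Nonempty (↥S ↪ ULift.{1} κ.ord.ToType) := by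
    rw [← Cardinal.le_def, hcard]
    exact hSle
  set idx : ↥S → Ordinal :=
    fun s => ((Ordinal.ToType.mk (o := κ.ord)).symm (e s).down).1 with hidx
  have hidxlt : ∀ s : ↥S, idx s < κ.ord :=
    fun s => ((Ordinal.ToType.mk (o := κ.ord)).symm (e s).down).2
  have hidxinj : Function.Injective idx := by
    intro s t h
    apply e.injective
    have h2 := Subtype.ext h
    have h3 := (Ordinal.ToType.mk (o := κ.ord)).symm.injective h2
    cases hes : e s; cases het : e t
    rw [hes, het] at h3
    simp only at h3
    rw [h3]
  set F : Ordinal → (↥A → Ordinal) := fun i =>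
    if h : ∃ s : ↥S, idx s = i then (h.choose : ↥S).1 else fun _ => 0 with hF
  have hFpi : ∀ i, F i ∈ piSet A := by
    intro i
    simp only [hF]
    split
    · next h => exact hSsub h.choose.2
    · exact hzero
  have hFidx : ∀ s : ↥S, F (idx s) = s.1 := by
    intro s
    have h : ∃ t : ↥S, idx t = idx s := ⟨s, rfl⟩
    simp only [hF, dif_pos h]
    exact congrArg Subtype.val (hidxinj h.choose_spec)
  -- the diagonal function
  set f : ↥A → Ordinal := fun a => Ordinal.bsup (c a) (fun i _ => F i a + 1) with hfdef
  have hfpi : f ∈ piSet A := by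
    intro a
    apply Ordinal.bsup_lt_ord
    · rw [(hA a a.2).cof_ord]
      exact Cardinal.lt_ord.1 (hclt a)
    · intro i hi
      have h1 : F i a < (a : Cardinal).ord := hFpi i a
      have := (Cardinal.isSuccLimit_ord (haleph a)).succ_lt h1
      rwa [Order.succ_eq_add_one] at this
  obtain ⟨g, hgS, hgD⟩ := hScof f hfpi
  set s₀ : ↥S := ⟨g, hgS⟩ with hs₀
  obtain ⟨o, hoC, hio⟩ := hCunb (idx s₀) (hidxlt s₀)
  have hoκ : o.card < κ := Cardinal.lt_ord.1 (hCsub hoC)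
  have hT : {a : ↥A | o.card < (a : Cardinal)} ∈ D := htail o.card hoκ
  obtain ⟨a, haT, haD⟩ := Ultrafilter.nonempty_of_mem (Filter.inter_mem hT hgD)
  -- at coordinate a, g a < f a, contradicting f a ≤ g a
  have hoa : o < (a : Cardinal).ord := Cardinal.lt_ord.2 haT
  have hoca : o ≤ c a := le_csSup ⟨(a : Cardinal).ord, hbdd a⟩ ⟨hoC, hoa⟩
  have hica : idx s₀ < c a := lt_of_lt_of_le hio hoca
  have hgf : g a + 1 ≤ f a := by
    have := Ordinal.le_bsup (fun i (_ : i < c a) => F i a + 1) (idx s₀) hica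
    rwa [hFidx s₀] at this
  have hgg : g a < g a + 1 := by
    rw [Ordinal.add_one_eq_succ]; exact Order.lt_succ _
  exact absurd (haD : f a ≤ g a) (not_le.2 (lt_of_lt_of_le hgg hgf))

end TukeySpec
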